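/- The point ((192 − 85√3)/122, (115 − 22√3)/122, (115 − 22√3)/122) is equidistant from A = (0,2,2) and B = (4−√3, 1, 1), with common distance r = √(94725 − 21288√3)/122, and r < 2. -/

import Mathlib

noncomputable def pt3 (a b c : ℝ) : EuclideanSpace ℝ (Fin 3) := WithLp.toLp 2 ![a, b, c]

/-- The point `((192 − 85√3)/122, (115 − 22√3)/122, (115 − 22√3)/122)` is equidistant
from `A = (0,2,2)` and `B = (4−√3, 1, 1)`, with common distance
`r = √(94725 − 21288√3)/122`, and `r < 2`. -/
theorem stmt10 :
    dist (pt3 ((192 - 85 * Real.sqrt 3) / 122) ((115 - 22 * Real.sqrt 3) / 122)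
        ((115 - 22 * Real.sqrt 3) / 122)) (pt3 0 2 2)
      = Real.sqrt (94725 - 21288 * Real.sqrt 3) / 122 ∧
    dist (pt3 ((192 - 85 * Real.sqrt 3) / 122) ((115 - 22 * Real.sqrt 3) / 122)
        ((115 - 22 * Real.sqrt 3) / 122)) (pt3 (4 - Real.sqrt 3) 1 1)
      = Real.sqrt (94725 - 21288 * Real.sqrt 3) / 122 ∧
    Real.sqrt (94725 - 21288 * Real.sqrt 3) / 122 < 2 := by
  have h3 : Real.sqrt 3 ^ 2 = 3 := Real.sq_sqrt (by norm_num)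
  have hnn : (0:ℝ) ≤ 94725 - 21288 * Real.sqrt 3 := by
    have h2 : Real.sqrt 3 ≤ 2 := by
      nlinarith [Real.sqrt_nonneg 3, h3]
    nlinarith
  have hd : ∀ x y : EuclideanSpace ℝ (Fin 3),
      dist x y = Real.sqrt ((x 0 - y 0)^2 + (x 1 - y 1)^2 + (x 2 - y 2)^2) := by
    intro x y
    rw [EuclideanSpace.dist_eq, Fin.sum_univ_three]
    simp [Real.dist_eq, sq_abs]
  have hsq : Real.sqrt ((94725 - 21288 * Real.sqrt 3) / (122:ℝ)^2)
      = Real.sqrt (94725 - 21288 * Real.sqrt 3) / 122 := by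
    rw [Real.sqrt_div hnn, Real.sqrt_sq (by norm_num : (0:ℝ) ≤ 122)]
  refine ⟨?_, ?_, ?_⟩
  · rw [hd]
    have he : ((pt3 ((192 - 85 * Real.sqrt 3) / 122) ((115 - 22 * Real.sqrt 3) / 122)
        ((115 - 22 * Real.sqrt 3) / 122)) 0 - (pt3 0 2 2) 0)^2
        + ((pt3 ((192 - 85 * Real.sqrt 3) / 122) ((115 - 22 * Real.sqrt 3) / 122)
        ((115 - 22 * Real.sqrt 3) / 122)) 1 - (pt3 0 2 2) 1)^2
        + ((pt3 ((192 - 85 * Real.sqrt 3) / 122) ((115 - 22 * Real.sqrt 3) / 122)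
        ((115 - 22 * Real.sqrt 3) / 122)) 2 - (pt3 0 2 2) 2)^2
        = (94725 - 21288 * Real.sqrt 3) / (122:ℝ)^2 := by
      simp only [pt3, WithLp.ofLp_toLp, Matrix.cons_val_zero, Matrix.cons_val_one, Matrix.head_cons,
        Matrix.cons_val_two, Matrix.tail_cons]
      linear_combination (8193/14884 : ℝ) * h3
    rw [he, hsq]
  · rw [hd]
    have he : ((pt3 ((192 - 85 * Real.sqrt 3) / 122) ((115 - 22 * Real.sqrt 3) / 122)
        ((115 - 22 * Real.sqrt 3) / 122)) 0 - (pt3 (4 - Real.sqrt 3) 1 1) 0)^2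
        + ((pt3 ((192 - 85 * Real.sqrt 3) / 122) ((115 - 22 * Real.sqrt 3) / 122)
        ((115 - 22 * Real.sqrt 3) / 122)) 1 - (pt3 (4 - Real.sqrt 3) 1 1) 1)^2
        + ((pt3 ((192 - 85 * Real.sqrt 3) / 122) ((115 - 22 * Real.sqrt 3) / 122)
        ((115 - 22 * Real.sqrt 3) / 122)) 2 - (pt3 (4 - Real.sqrt 3) 1 1) 2)^2
        = (94725 - 21288 * Real.sqrt 3) / (122:ℝ)^2 := by
      simp only [pt3, WithLp.ofLp_toLp, Matrix.cons_val_zero, Matrix.cons_val_one, Matrix.head_cons,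
        Matrix.cons_val_two, Matrix.tail_cons]
      linear_combination (2337/14884 : ℝ) * h3
    rw [he, hsq]
  · rw [div_lt_iff₀ (by norm_num : (0:ℝ) < 122)]
    have hlt : Real.sqrt (94725 - 21288 * Real.sqrt 3) < 244 := by
      rw [show (244:ℝ) = Real.sqrt (244^2) from
        (Real.sqrt_sq (by norm_num : (0:ℝ) ≤ 244)).symm]
      apply Real.sqrt_lt_sqrt hnn
      have hs : (1.66:ℝ) < Real.sqrt 3 := by
        nlinarith [Real.sq_sqrt (show (0:ℝ) ≤ 3 by norm_num), Real.sqrt_nonneg 3]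
      nlinarith
    linarith
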